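/- (Second derivative bound for the eigenvector, eigenvalue 0 case.) Let d ≥ 1, λ > 0, M₁ ≥ 0, M₂ ≥ 0. Let H : ℝ → Matrix (Fin d) (Fin d) ℂ be twice differentiable on [0,1] with each H(s) Hermitian, ‖H'(s)‖ ≤ M₁ and ‖H''(s)‖ ≤ M₂ for all s ∈ [0,1], and let Ψ : ℝ → EuclideanSpace ℂ (Fin d) be twice differentiable on [0,1] with ‖Ψ(s)‖ = 1, H(s) Ψ(s) = 0, and ⟨Ψ'(s), Ψ(s)⟩ = 0 for all s ∈ [0,1]. Assume that for every s ∈ [0,1] the kernel of H(s) is spanned by Ψ(s) and every nonzero eigenvalue μ of H(s) satisfies |μ| ≥ λ. Then for every s ∈ [0,1], ‖Ψ''(s)‖ ≤ M₂/λ + 3·M₁²/λ². -/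

import Mathlib

open scoped InnerProductSpace

/-- The continuous linear map on Euclidean space associated to a matrix;
its operator norm is the operator norm induced by the Euclidean norm. -/
noncomputable def opCLM {d : ℕ} (A : Matrix (Fin d) (Fin d) ℂ) :
    EuclideanSpace ℂ (Fin d) →L[ℂ] EuclideanSpace ℂ (Fin d) :=
  Matrix.toEuclideanCLM (𝕜 := ℂ) A

lemma opCLM_apply' {d : ℕ} (A : Matrix (Fin d) (Fin d) ℂ) (x : EuclideanSpace ℂ (Fin d)) :
    opCLM A x = (WithLp.equiv 2 _).symm (A.mulVec (WithLp.equiv 2 _ x)) := by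
  apply (WithLp.equiv 2 _).injective
  rfl

lemma opCLM_apply_eigen {d : ℕ} (A : Matrix (Fin d) (Fin d) ℂ) (hA : A.IsHermitian) (i : Fin d) :
    opCLM A (hA.eigenvectorBasis i) = (hA.eigenvalues i : ℂ) • hA.eigenvectorBasis i := by
  rw [opCLM_apply']
  have h := hA.mulVec_eigenvectorBasis i
  apply (WithLp.equiv 2 _).injective
  rw [Equiv.apply_symm_apply]
  ext j
  have := congrFun h j
  simpa [Pi.smul_apply, Complex.real_smul] using this

lemma opCLM_selfAdjoint {d : ℕ} (A : Matrix (Fin d) (Fin d) ℂ) (hA : A.IsHermitian) :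
    IsSelfAdjoint (opCLM A) := by
  rw [IsSelfAdjoint, opCLM, ← map_star]
  exact congrArg _ hA

lemma norm_sq_eq_sum_sq {d : ℕ} (b : OrthonormalBasis (Fin d) ℂ (EuclideanSpace ℂ (Fin d)))
    (x : EuclideanSpace ℂ (Fin d)) : ‖x‖ ^ 2 = ∑ i, ‖⟪b i, x⟫_ℂ‖ ^ 2 := by
  rw [← b.repr.norm_map x, EuclideanSpace.norm_eq, Real.sq_sqrt (by positivity)]
  congr 1; ext i; rw [b.repr_apply_apply]

lemma coercive {d : ℕ} (A : Matrix (Fin d) (Fin d) ℂ) (hA : A.IsHermitian)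
    (lam : ℝ) (hlam : 0 < lam) (Ψ₀ : EuclideanSpace ℂ (Fin d))
    (hker : ∀ v : EuclideanSpace ℂ (Fin d), opCLM A v = 0 → ∃ c : ℂ, v = c • Ψ₀)
    (hgap : ∀ (μ : ℂ) (v : EuclideanSpace ℂ (Fin d)), v ≠ 0 →
      opCLM A v = μ • v → μ ≠ 0 → lam ≤ ‖μ‖)
    (v : EuclideanSpace ℂ (Fin d)) (hv : ⟪Ψ₀, v⟫_ℂ = 0) :
    lam * ‖v‖ ≤ ‖opCLM A v‖ := by
  set b := hA.eigenvectorBasis with hb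
  have hsym : ∀ x y, ⟪opCLM A x, y⟫_ℂ = ⟪x, opCLM A y⟫_ℂ :=
    ContinuousLinearMap.isSelfAdjoint_iff_isSymmetric.mp (opCLM_selfAdjoint A hA)
  have key : ∀ i, lam ^ 2 * ‖⟪b i, v⟫_ℂ‖ ^ 2 ≤ ‖⟪b i, opCLM A v⟫_ℂ‖ ^ 2 := by
    intro i
    have hbi : ⟪b i, opCLM A v⟫_ℂ = (hA.eigenvalues i : ℂ) * ⟪b i, v⟫_ℂ := by
      rw [← hsym, opCLM_apply_eigen A hA i, inner_smul_left, Complex.conj_ofReal]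
    by_cases hμ : hA.eigenvalues i = 0
    · have h0 : opCLM A (b i) = 0 := by
        rw [opCLM_apply_eigen A hA i, hμ]; simp
      obtain ⟨c, hc⟩ := hker (b i) h0
      have : ⟪b i, v⟫_ℂ = 0 := by
        rw [hc, inner_smul_left, hv, mul_zero]
      simp [this, hbi, hμ]
    · have hge : lam ≤ |hA.eigenvalues i| := by
        have := hgap (hA.eigenvalues i : ℂ) (b i) (b.orthonormal.ne_zero i)
          (opCLM_apply_eigen A hA i) (by exact_mod_cast hμ)
        simpa [Complex.norm_real] using this
      rw [hbi]
      have h2 : ‖(hA.eigenvalues i : ℂ) * ⟪b i, v⟫_ℂ‖ = |hA.eigenvalues i| * ‖⟪b i, v⟫_ℂ‖ := by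
        rw [norm_mul, Complex.norm_real, Real.norm_eq_abs]
      rw [h2, mul_pow]
      have h1 : lam ^ 2 ≤ |hA.eigenvalues i| ^ 2 := pow_le_pow_left₀ hlam.le hge 2
      nlinarith [sq_nonneg ‖⟪b i, v⟫_ℂ‖]
  have hsum : (lam * ‖v‖) ^ 2 ≤ ‖opCLM A v‖ ^ 2 := by
    rw [mul_pow, norm_sq_eq_sum_sq b v, norm_sq_eq_sum_sq b (opCLM A v), Finset.mul_sum]
    exact Finset.sum_le_sum fun i _ => key i
  nlinarith [norm_nonneg (opCLM A v), mul_nonneg hlam.le (norm_nonneg v)]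

lemma deriv_zero_of_eqOn_zero {E : Type*} [NormedAddCommGroup E] [NormedSpace ℝ E]
    {f : ℝ → E} {D : E} {s : ℝ} (hs : s ∈ Set.Icc (0:ℝ) 1)
    (hd : HasDerivAt f D s) (h0 : ∀ t ∈ Set.Icc (0:ℝ) 1, f t = 0) : D = 0 := by
  have hU : UniqueDiffWithinAt ℝ (Set.Icc (0:ℝ) 1) s := (uniqueDiffOn_Icc one_pos) s hs
  have h1 : HasFDerivWithinAt f (ContinuousLinearMap.smulRight (1 : ℝ →L[ℝ] ℝ) D)
      (Set.Icc (0:ℝ) 1) s := hd.hasDerivWithinAt.hasFDerivWithinAt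
  have h2 : HasFDerivWithinAt f (0 : ℝ →L[ℝ] E) (Set.Icc (0:ℝ) 1) s :=
    (hasFDerivWithinAt_const (0:E) s _).congr h0 (h0 s hs)
  have heq := hU.eq h1 h2
  have := congrArg (fun L : ℝ →L[ℝ] E => L 1) heq
  simpa using this

lemma hasDerivAt_clm_apply' {E : Type*} [NormedAddCommGroup E] [NormedSpace ℂ E]
    {c : ℝ → E →L[ℂ] E} {c' : E →L[ℂ] E} {u : ℝ → E} {u' : E} {x : ℝ}
    (hc : HasDerivAt c c' x) (hu : HasDerivAt u u' x) :
    HasDerivAt (fun y => c y (u y)) (c' (u x) + c x u') x := by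
  have hc2 : HasDerivAt (fun y => (c y).restrictScalars ℝ) (c'.restrictScalars ℝ) x := by
    have := (ContinuousLinearMap.restrictScalarsIsometry ℂ E E ℝ ℝ)
      |>.toContinuousLinearMap.hasFDerivAt (x := c x) |>.comp_hasDerivAt x hc
    exact this
  exact hc2.clm_apply hu

lemma arith_split (lam M₁ M₂ : ℝ) (hlam : 0 < lam) :
    (lam * M₂ + 3 * M₁ ^ 2) / lam ^ 2 = M₂ / lam + 3 * M₁ ^ 2 / lam ^ 2 := by
  field_simp

set_option maxHeartbeats 4000000 in
/-- **Second derivative bound for the eigenvector, eigenvalue 0 case.** -/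
theorem eigenvector_second_deriv_bound {d : ℕ} (hd : 1 ≤ d)
    (lam M₁ M₂ : ℝ) (hlam : 0 < lam) (hM₁ : 0 ≤ M₁) (hM₂ : 0 ≤ M₂)
    (H H' H'' : ℝ → Matrix (Fin d) (Fin d) ℂ)
    (hHd1 : ∀ s ∈ Set.Icc (0:ℝ) 1, HasDerivAt (fun t => opCLM (H t)) (opCLM (H' s)) s)
    (hHd2 : ∀ s ∈ Set.Icc (0:ℝ) 1, HasDerivAt (fun t => opCLM (H' t)) (opCLM (H'' s)) s)
    (hherm : ∀ s ∈ Set.Icc (0:ℝ) 1, (H s).IsHermitian)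
    (hM₁b : ∀ s ∈ Set.Icc (0:ℝ) 1, ‖opCLM (H' s)‖ ≤ M₁)
    (hM₂b : ∀ s ∈ Set.Icc (0:ℝ) 1, ‖opCLM (H'' s)‖ ≤ M₂)
    (Ψ Ψ' Ψ'' : ℝ → EuclideanSpace ℂ (Fin d))
    (hΨd1 : ∀ s ∈ Set.Icc (0:ℝ) 1, HasDerivAt Ψ (Ψ' s) s)
    (hΨd2 : ∀ s ∈ Set.Icc (0:ℝ) 1, HasDerivAt Ψ' (Ψ'' s) s)
    (hΨnorm : ∀ s ∈ Set.Icc (0:ℝ) 1, ‖Ψ s‖ = 1)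
    (heig : ∀ s ∈ Set.Icc (0:ℝ) 1, opCLM (H s) (Ψ s) = 0)
    (hphase : ∀ s ∈ Set.Icc (0:ℝ) 1, ⟪Ψ' s, Ψ s⟫_ℂ = 0)
    (hker : ∀ s ∈ Set.Icc (0:ℝ) 1, ∀ v : EuclideanSpace ℂ (Fin d),
      opCLM (H s) v = 0 → ∃ c : ℂ, v = c • Ψ s)
    (hgap : ∀ s ∈ Set.Icc (0:ℝ) 1, ∀ (μ : ℂ) (v : EuclideanSpace ℂ (Fin d)), v ≠ 0 →
      opCLM (H s) v = μ • v → μ ≠ 0 → lam ≤ ‖μ‖) :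
    ∀ s ∈ Set.Icc (0:ℝ) 1, ‖Ψ'' s‖ ≤ M₂ / lam + 3 * M₁ ^ 2 / lam ^ 2 := by
  -- first derivative relation
  have h1rel : ∀ t ∈ Set.Icc (0:ℝ) 1,
      opCLM (H' t) (Ψ t) + opCLM (H t) (Ψ' t) = 0 := by
    intro t ht
    exact deriv_zero_of_eqOn_zero (E := EuclideanSpace ℂ (Fin d)) (f := fun y => opCLM (H y) (Ψ y)) ht (hasDerivAt_clm_apply' (hHd1 t ht) (hΨd1 t ht)) heig
  intro s hs
  have hherms := hherm s hs
  -- second derivative relation at s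
  have h2rel : opCLM (H'' s) (Ψ s) + opCLM (H' s) (Ψ' s)
      + (opCLM (H' s) (Ψ' s) + opCLM (H s) (Ψ'' s)) = 0 := by
    refine deriv_zero_of_eqOn_zero (E := EuclideanSpace ℂ (Fin d))
      (f := fun t => opCLM (H' t) (Ψ t) + opCLM (H t) (Ψ' t)) hs ?_ h1rel
    exact (hasDerivAt_clm_apply' (hHd2 s hs) (hΨd1 s hs)).add
      (hasDerivAt_clm_apply' (hHd1 s hs) (hΨd2 s hs))
  -- phase derivative relation at s
  have hpp : ⟪Ψ' s, Ψ' s⟫_ℂ + ⟪Ψ'' s, Ψ s⟫_ℂ = 0 := by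
    refine deriv_zero_of_eqOn_zero (E := ℂ) (f := fun t => ⟪Ψ' t, Ψ t⟫_ℂ) hs ?_ hphase
    exact HasDerivAt.inner ℂ (hΨd2 s hs) (hΨd1 s hs)
  -- perpendicularity of Ψ'
  have hperp1 : ⟪Ψ s, Ψ' s⟫_ℂ = 0 := by
    rw [← inner_conj_symm, hphase s hs, map_zero]
  -- first derivative bound
  have hTΨ' : opCLM (H s) (Ψ' s) = -(opCLM (H' s) (Ψ s)) :=
    eq_neg_of_add_eq_zero_right (h1rel s hs)
  have hΨ'b : lam * ‖Ψ' s‖ ≤ M₁ := by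
    have hco := coercive (H s) hherms lam hlam (Ψ s) (hker s hs) (hgap s hs) (Ψ' s) hperp1
    have : ‖opCLM (H s) (Ψ' s)‖ ≤ M₁ := by
      rw [hTΨ', norm_neg]
      calc ‖opCLM (H' s) (Ψ s)‖ ≤ ‖opCLM (H' s)‖ * ‖Ψ s‖ :=
            (opCLM (H' s)).le_opNorm (Ψ s)
        _ ≤ M₁ * 1 := by
            apply mul_le_mul (hM₁b s hs) (le_of_eq (hΨnorm s hs)) (norm_nonneg _)
              ((norm_nonneg _).trans (hM₁b s hs))
        _ = M₁ := mul_one M₁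
    linarith
  -- the component of Ψ'' along Ψ
  set c : ℂ := ⟪Ψ s, Ψ'' s⟫_ℂ with hcdef
  have hcval : c = -⟪Ψ' s, Ψ' s⟫_ℂ := by
    have h1 : ⟪Ψ'' s, Ψ s⟫_ℂ = -⟪Ψ' s, Ψ' s⟫_ℂ := by linear_combination hpp
    rw [hcdef, ← inner_conj_symm, h1, map_neg, inner_conj_symm]
  have hcnorm : ‖c‖ = ‖Ψ' s‖ ^ 2 := by
    rw [hcval, norm_neg, @inner_self_eq_norm_sq_to_K ℂ]
    simp [Complex.norm_real]
  -- perpendicular component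
  set Q : EuclideanSpace ℂ (Fin d) := Ψ'' s - c • Ψ s with hQdef
  have hQperp : ⟪Ψ s, Q⟫_ℂ = 0 := by
    rw [hQdef, inner_sub_right, inner_smul_right, @inner_self_eq_norm_sq_to_K ℂ, hΨnorm s hs]
    push_cast
    ring
  have hTQ : opCLM (H s) Q = opCLM (H s) (Ψ'' s) := by
    rw [hQdef, map_sub, map_smul, heig s hs, smul_zero, sub_zero]
  have hTΨ'' : ‖opCLM (H s) (Ψ'' s)‖ ≤ M₂ + 2 * M₁ * ‖Ψ' s‖ := by
    have hval : opCLM (H s) (Ψ'' s)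
        = -(opCLM (H'' s) (Ψ s) + opCLM (H' s) (Ψ' s) + opCLM (H' s) (Ψ' s)) := by
      apply eq_neg_of_add_eq_zero_right
      rw [← h2rel]; abel
    have hb1 : ‖opCLM (H'' s) (Ψ s)‖ ≤ M₂ := by
      calc ‖opCLM (H'' s) (Ψ s)‖ ≤ ‖opCLM (H'' s)‖ * ‖Ψ s‖ := (opCLM (H'' s)).le_opNorm _
        _ ≤ M₂ * 1 := mul_le_mul (hM₂b s hs) (le_of_eq (hΨnorm s hs)) (norm_nonneg _)
            ((norm_nonneg _).trans (hM₂b s hs))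
        _ = M₂ := mul_one M₂
    have hb2 : ‖opCLM (H' s) (Ψ' s)‖ ≤ M₁ * ‖Ψ' s‖ := by
      calc ‖opCLM (H' s) (Ψ' s)‖ ≤ ‖opCLM (H' s)‖ * ‖Ψ' s‖ := (opCLM (H' s)).le_opNorm _
        _ ≤ M₁ * ‖Ψ' s‖ := mul_le_mul_of_nonneg_right (hM₁b s hs) (norm_nonneg _)
    rw [hval, norm_neg]
    calc ‖opCLM (H'' s) (Ψ s) + opCLM (H' s) (Ψ' s) + opCLM (H' s) (Ψ' s)‖
        ≤ ‖opCLM (H'' s) (Ψ s) + opCLM (H' s) (Ψ' s)‖ + ‖opCLM (H' s) (Ψ' s)‖ := norm_add_le _ _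
      _ ≤ ‖opCLM (H'' s) (Ψ s)‖ + ‖opCLM (H' s) (Ψ' s)‖ + ‖opCLM (H' s) (Ψ' s)‖ := by
          have := norm_add_le (opCLM (H'' s) (Ψ s)) (opCLM (H' s) (Ψ' s)); linarith
      _ ≤ M₂ + 2 * M₁ * ‖Ψ' s‖ := by linarith
  have hQb : lam * ‖Q‖ ≤ M₂ + 2 * M₁ * ‖Ψ' s‖ := by
    have hco := coercive (H s) hherms lam hlam (Ψ s) (hker s hs) (hgap s hs) Q hQperp
    rw [hTQ] at hco
    linarith
  have hdecomp : ‖Ψ'' s‖ ≤ ‖Q‖ + ‖Ψ' s‖ ^ 2 := by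
    have : Ψ'' s = Q + c • Ψ s := by rw [hQdef]; abel
    rw [this]
    calc ‖Q + c • Ψ s‖ ≤ ‖Q‖ + ‖c • Ψ s‖ := norm_add_le _ _
      _ = ‖Q‖ + ‖Ψ' s‖ ^ 2 := by rw [norm_smul, hΨnorm s hs, mul_one, hcnorm]
  -- final arithmetic
  have hfin : ‖Ψ'' s‖ ≤ (lam * M₂ + 3 * M₁ ^ 2) / lam ^ 2 := by
    rw [le_div_iff₀ (by positivity)]
    nlinarith [norm_nonneg Q, norm_nonneg (Ψ' s), hlam.le, hM₁,
      mul_le_mul_of_nonneg_left hQb hlam.le,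
      mul_self_le_mul_self (mul_nonneg hlam.le (norm_nonneg (Ψ' s))) hΨ'b,
      mul_le_mul_of_nonneg_left hΨ'b hM₁]
  calc ‖Ψ'' s‖ ≤ (lam * M₂ + 3 * M₁ ^ 2) / lam ^ 2 := hfin
    _ = M₂ / lam + 3 * M₁ ^ 2 / lam ^ 2 := arith_split lam M₁ M₂ hlam
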